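/- Fix integers q ≥ 2, c ≥ 1, d ≥ 3, and l ≥ 1, and for every integer n ≥ 1 with d dividing cn define R_n(l) := C(n,l) · coef(g_{q,d}^{(cn/d)}(x), x^{cl}) / ( C(cn,cl) · (q−1)^{(c−1)l} ). If c = 1 and l = 1, or if q = 2 and c·l is odd, then R_n(l) = 0 for all such n. Otherwise there exist constants 0 < k₁ ≤ k₂ and an integer N such that k₁ · n^{−⌈(c−2)l/2⌉} ≤ R_n(l) ≤ k₂ · n^{−⌈(c−2)l/2⌉} for all n ≥ N with d dividing cn. -/

import Mathlib

open Real Set Filter Polynomial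
open scoped Classical

/-- The polynomial `g_{q,d}^{(n)}(x) = q^{-n}·([1+(q−1)x]^d + (q−1)(1−x)^d)^n`. -/
noncomputable def gPoly (q d n : ℕ) : Polynomial ℝ :=
  Polynomial.C (((q : ℝ) ^ n)⁻¹) *
    ((Polynomial.C 1 + Polynomial.C ((q : ℝ) - 1) * Polynomial.X) ^ d +
      Polynomial.C ((q : ℝ) - 1) * (Polynomial.C 1 - Polynomial.X) ^ d) ^ n

/-- The quantity `R_n(l)`, i.e. the expected number of weight-`l` codewords in the
`(c,d)`-regular LDPC ensemble over the field of order `q`. -/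
noncomputable def Rfun (q c d l n : ℕ) : ℝ :=
  (n.choose l : ℝ) * (gPoly q d (c * n / d)).coeff (c * l) /
    (((c * n).choose (c * l) : ℝ) * ((q : ℝ) - 1) ^ ((c - 1) * l))

noncomputable def Spoly (q d : ℕ) : Polynomial ℝ :=
  (Polynomial.C 1 + Polynomial.C ((q : ℝ) - 1) * Polynomial.X) ^ d +
    Polynomial.C ((q : ℝ) - 1) * (Polynomial.C 1 - Polynomial.X) ^ d

noncomputable def Tpoly (q d : ℕ) : Polynomial ℝ := Spoly q d - Polynomial.C (q : ℝ)

lemma coeff_one_add_CX_pow (a : ℝ) (d j : ℕ) :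
    ((Polynomial.C 1 + Polynomial.C a * Polynomial.X : Polynomial ℝ) ^ d).coeff j
      = (d.choose j : ℝ) * a ^ j := by
  rw [show (Polynomial.C 1 + Polynomial.C a * Polynomial.X : Polynomial ℝ)
      = Polynomial.C a * Polynomial.X + 1 by push_cast [map_one]; ring, add_pow]
  rw [Polynomial.finset_sum_coeff]
  have : ∀ k ∈ Finset.range (d + 1),
      ((Polynomial.C a * Polynomial.X) ^ k * 1 ^ (d - k) * (d.choose k : Polynomial ℝ)).coeff j
        = if k = j then (d.choose j : ℝ) * a ^ j else 0 := by
    intro k hk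
    rw [one_pow, mul_one, mul_pow, ← Polynomial.C_pow, mul_comm,
      ← Polynomial.C_eq_natCast, ← mul_assoc, ← Polynomial.C_mul, Polynomial.coeff_C_mul,
      Polynomial.coeff_X_pow]
    by_cases h : j = k
    · subst h; simp [mul_comm]
    · simp [h, Ne.symm h]
  rw [Finset.sum_congr rfl this, Finset.sum_ite_eq' (Finset.range (d+1)) j]
  by_cases h : j ≤ d
  · simp [Nat.lt_succ_of_le h]
  · simp [Finset.mem_range, Nat.lt_succ, h, Nat.choose_eq_zero_of_lt (lt_of_not_ge h)]

lemma Spoly_coeff (q d j : ℕ) :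
    (Spoly q d).coeff j
      = (d.choose j : ℝ) * (((q:ℝ) - 1) ^ j + ((q:ℝ) - 1) * (-1) ^ j) := by
  have h2 : (Polynomial.C 1 - Polynomial.X : Polynomial ℝ)
      = Polynomial.C 1 + Polynomial.C (-1 : ℝ) * Polynomial.X := by
    push_cast [map_one, map_neg]; ring
  rw [Spoly, Polynomial.coeff_add, coeff_one_add_CX_pow, h2, Polynomial.coeff_C_mul,
    coeff_one_add_CX_pow]
  ring

lemma Tpoly_coeff (q d j : ℕ) :
    (Tpoly q d).coeff j
      = (d.choose j : ℝ) * (((q:ℝ) - 1) ^ j + ((q:ℝ) - 1) * (-1) ^ j)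
        - if j = 0 then (q : ℝ) else 0 := by
  rw [Tpoly, Polynomial.coeff_sub, Spoly_coeff, Polynomial.coeff_C]

lemma Tpoly_coeff_zero (q d : ℕ) : (Tpoly q d).coeff 0 = 0 := by
  rw [Tpoly_coeff]; simp

lemma Tpoly_coeff_one (q d : ℕ) : (Tpoly q d).coeff 1 = 0 := by
  rw [Tpoly_coeff]; simp

lemma Tpoly_coeff_nonneg (q d : ℕ) (hq : 2 ≤ q) (j : ℕ) : 0 ≤ (Tpoly q d).coeff j := by
  have hq1 : (1:ℝ) ≤ (q:ℝ) - 1 := by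
    have : (2:ℝ) ≤ (q:ℝ) := by exact_mod_cast hq
    linarith
  rcases Nat.eq_zero_or_pos j with hj | hj
  · subst hj; rw [Tpoly_coeff_zero]
  rw [Tpoly_coeff, if_neg (by omega)]
  rw [sub_zero]
  apply mul_nonneg (by positivity)
  rcases Nat.even_or_odd j with he | ho
  · rw [he.neg_one_pow]
    nlinarith [pow_nonneg (by linarith : (0:ℝ) ≤ (q:ℝ)-1) j]
  · rw [ho.neg_one_pow]
    have : ((q:ℝ)-1) ^ 1 ≤ ((q:ℝ)-1) ^ j := pow_le_pow_right₀ hq1 hj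
    simp only [pow_one] at this
    nlinarith

lemma Tpoly_coeff_two_pos (q d : ℕ) (hq : 2 ≤ q) (hd : 3 ≤ d) :
    0 < (Tpoly q d).coeff 2 := by
  have hq1 : (1:ℝ) ≤ (q:ℝ) - 1 := by
    have : (2:ℝ) ≤ (q:ℝ) := by exact_mod_cast hq
    linarith
  rw [Tpoly_coeff, if_neg (by omega), sub_zero]
  have hch : 0 < (d.choose 2 : ℝ) := by
    exact_mod_cast Nat.choose_pos (by omega : 2 ≤ d)
  nlinarith

lemma Tpoly_coeff_three_pos (q d : ℕ) (hq : 3 ≤ q) (hd : 3 ≤ d) :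
    0 < (Tpoly q d).coeff 3 := by
  have hq1 : (2:ℝ) ≤ (q:ℝ) - 1 := by
    have : (3:ℝ) ≤ (q:ℝ) := by exact_mod_cast hq
    linarith
  rw [Tpoly_coeff, if_neg (by omega), sub_zero]
  have hch : 0 < (d.choose 3 : ℝ) := by
    exact_mod_cast Nat.choose_pos hd
  have : (-1:ℝ)^3 = -1 := by norm_num
  rw [this]
  have hx0 : (0:ℝ) < (q:ℝ) - 1 := by linarith
  have key : (0:ℝ) < ((q:ℝ)-1) * (((q:ℝ)-1) - 1) * (((q:ℝ)-1) + 1) :=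
    mul_pos (mul_pos hx0 (by linarith)) (by linarith)
  nlinarith [key]

lemma Tpoly_coeff_odd_zero (d : ℕ) (j : ℕ) (hj : Odd j) : (Tpoly 2 d).coeff j = 0 := by
  have hj0 : j ≠ 0 := by rintro rfl; exact absurd (Nat.odd_iff.mp hj) (by norm_num)
  rw [Tpoly_coeff, if_neg hj0, sub_zero, hj.neg_one_pow]
  norm_num

section PowCoeff
variable (p : Polynomial ℝ)

lemma pow_coeff_low (h0 : p.coeff 0 = 0) (h1 : p.coeff 1 = 0) :
    ∀ i j : ℕ, j < 2 * i → (p ^ i).coeff j = 0 := by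
  intro i
  induction i with
  | zero => intro j h; omega
  | succ i ih =>
    intro j h
    rw [pow_succ, Polynomial.coeff_mul]
    apply Finset.sum_eq_zero
    rintro ⟨a, b⟩ hab
    rw [Finset.HasAntidiagonal.mem_antidiagonal] at hab
    by_cases hb : b < 2
    · interval_cases b <;> simp [h0, h1]
    · have : a < 2 * i := by omega
      rw [ih a this, zero_mul]

lemma pow_coeff_nonneg (hp : ∀ j, 0 ≤ p.coeff j) : ∀ i j : ℕ, 0 ≤ (p ^ i).coeff j := by
  intro i
  induction i with
  | zero =>
    intro j
    rw [pow_zero, Polynomial.coeff_one]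
    split <;> norm_num
  | succ i ih =>
    intro j
    rw [pow_succ, Polynomial.coeff_mul]
    exact Finset.sum_nonneg fun x _ => mul_nonneg (ih x.1) (hp x.2)

lemma pow_coeff_diag (h0 : p.coeff 0 = 0) (h1 : p.coeff 1 = 0) :
    ∀ i : ℕ, (p ^ i).coeff (2 * i) = p.coeff 2 ^ i := by
  intro i
  induction i with
  | zero => simp
  | succ i ih =>
    rw [pow_succ, Polynomial.coeff_mul]
    rw [Finset.sum_eq_single (2 * i, 2)]
    · rw [ih, pow_succ]
    · rintro ⟨a, b⟩ hab hne
      rw [Finset.HasAntidiagonal.mem_antidiagonal] at hab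
      by_cases hb : b < 2
      · interval_cases b <;> simp [h0, h1]
      · have hb2 : b = 2 ∨ 2 < b := by omega
        rcases hb2 with rfl | hb2
        · exact absurd (by omega : a = 2 * i) (by simpa using fun h => hne (by simp [h]))
        · have : a < 2 * i := by omega
          rw [pow_coeff_low p h0 h1 i a this, zero_mul]
    · intro hmem
      exact absurd (Finset.HasAntidiagonal.mem_antidiagonal.mpr (by omega)) hmem

lemma coeff_mul_single_le (r : Polynomial ℝ) (hp : ∀ j, 0 ≤ p.coeff j)
    (hr : ∀ j, 0 ≤ r.coeff j) (a b : ℕ) :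
    p.coeff a * r.coeff b ≤ (p * r).coeff (a + b) := by
  rw [Polynomial.coeff_mul]
  exact Finset.single_le_sum (f := fun x : ℕ × ℕ => p.coeff x.1 * r.coeff x.2)
    (fun x _ => mul_nonneg (hp _) (hr _))
    (show ((a, b) : ℕ × ℕ) ∈ Finset.HasAntidiagonal.antidiagonal (a + b) from Finset.HasAntidiagonal.mem_antidiagonal.mpr rfl)

lemma pow_coeff_odd_zero' (hodd : ∀ j, Odd j → p.coeff j = 0) :
    ∀ i j : ℕ, Odd j → (p ^ i).coeff j = 0 := by
  intro i
  induction i with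
  | zero =>
    intro j hj
    rw [pow_zero, Polynomial.coeff_one, if_neg]
    rintro rfl
    exact absurd (Nat.odd_iff.mp hj) (by norm_num)
  | succ i ih =>
    intro j hj
    rw [pow_succ, Polynomial.coeff_mul]
    apply Finset.sum_eq_zero
    rintro ⟨a, b⟩ hab
    rw [Finset.HasAntidiagonal.mem_antidiagonal] at hab
    by_cases hb : Odd b
    · rw [hodd b hb, mul_zero]
    · have ha : Odd a := by
        rcases Nat.not_odd_iff_even.mp hb with ⟨t, ht⟩
        rcases hj with ⟨s, hs⟩
        exact ⟨s - t, by omega⟩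
      rw [ih a ha, zero_mul]

end PowCoeff

lemma Spow_coeff (q d m K : ℕ) :
    ((Spoly q d) ^ m).coeff K
      = ∑ k ∈ Finset.range (m + 1),
          (m.choose k : ℝ) * (q : ℝ) ^ (m - k) * ((Tpoly q d) ^ k).coeff K := by
  have hS : Spoly q d = Tpoly q d + Polynomial.C (q : ℝ) := by rw [Tpoly]; ring
  rw [hS, add_pow, Polynomial.finset_sum_coeff]
  apply Finset.sum_congr rfl
  intro k hk
  rw [← Polynomial.C_pow, mul_assoc, ← Polynomial.C_eq_natCast, ← Polynomial.C_mul,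
    Polynomial.coeff_mul_C]
  ring

lemma Spow_coeff_trunc (q d m K : ℕ) (hm : K / 2 ≤ m) :
    ((Spoly q d) ^ m).coeff K
      = ∑ k ∈ Finset.range (K / 2 + 1),
          (m.choose k : ℝ) * (q : ℝ) ^ (m - k) * ((Tpoly q d) ^ k).coeff K := by
  rw [Spow_coeff]
  symm
  apply Finset.sum_subset
  · exact Finset.range_subset_range.mpr (by omega)
  · intro k hk1 hk2
    rw [Finset.mem_range] at hk1 hk2
    have : K < 2 * k := by omega
    rw [pow_coeff_low (Tpoly q d) (Tpoly_coeff_zero q d) (Tpoly_coeff_one q d) k K this,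
      mul_zero]

lemma gPoly_coeff_eq (q d m K : ℕ) :
    (gPoly q d m).coeff K = (((q : ℝ) ^ m)⁻¹) * ((Spoly q d) ^ m).coeff K := by
  rw [gPoly, Polynomial.coeff_C_mul]; rfl

lemma gPoly_coeff_formula (q d m K : ℕ) (hq : 0 < q) (hm : K / 2 ≤ m) :
    (gPoly q d m).coeff K
      = ∑ k ∈ Finset.range (K / 2 + 1),
          (m.choose k : ℝ) * (((q : ℝ) ^ k)⁻¹) * ((Tpoly q d) ^ k).coeff K := by
  have hqne : (q : ℝ) ≠ 0 := by positivity
  rw [gPoly_coeff_eq, Spow_coeff_trunc q d m K hm, Finset.mul_sum]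
  apply Finset.sum_congr rfl
  intro k hk
  rw [Finset.mem_range] at hk
  have hkm : k ≤ m := by omega
  have hpow : (q : ℝ) ^ (m - k) * (q : ℝ) ^ k = (q : ℝ) ^ m := by
    rw [← pow_add, Nat.sub_add_cancel hkm]
  field_simp
  linear_combination (m.choose k : ℝ) * ((Tpoly q d) ^ k).coeff K * hpow

lemma ceil_half (K : ℕ) : (⌈(K : ℝ) / 2⌉ : ℤ) = (K : ℤ) - (K / 2 : ℕ) := by
  rcases Nat.even_or_odd K with ⟨a, rfl⟩ | ⟨a, rfl⟩
  · rw [show ((a + a : ℕ) : ℝ) / 2 = ((a : ℤ) : ℝ) by push_cast; ring, Int.ceil_intCast]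
    have : (a + a) / 2 = a := by omega
    rw [this]; push_cast; ring
  · rw [show ((2 * a + 1 : ℕ) : ℝ) / 2 = 1 / 2 + (a : ℤ) by push_cast; ring,
      Int.ceil_add_intCast]
    have h12 : (⌈(1 / 2 : ℝ)⌉ : ℤ) = 1 := by
      rw [Int.ceil_eq_iff]; norm_num
    have : (2 * a + 1) / 2 = a := by omega
    rw [h12, this]; push_cast; ring

lemma ceil_formula (c l : ℕ) :
    (⌈((c : ℝ) - 2) * (l : ℝ) / 2⌉ : ℤ) = (c * l : ℕ) - ((c * l / 2 : ℕ) : ℤ) - (l : ℤ) := by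
  have h1 : ((c : ℝ) - 2) * (l : ℝ) / 2 = ((c * l : ℕ) : ℝ) / 2 - ((l : ℕ) : ℤ) := by
    push_cast; ring
  rw [h1, Int.ceil_sub_intCast, ceil_half]

lemma aux_eq_low (t u lf If dr cr w n : ℝ) (l I K : ℕ)
    (hlf : lf ≠ 0) (hIf : If ≠ 0) (hdr : dr ≠ 0) (hcr : cr ≠ 0) (hw : w ≠ 0) (hn : n ≠ 0) :
    t * u / (2 ^ l * lf * (2 * dr) ^ I * If * cr ^ K * w) * (n ^ l * n ^ I / n ^ K)
      = ((n / 2) ^ l / lf * ((n / (2 * dr)) ^ I / If * (u * t))) / ((cr * n) ^ K * w) := by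
  rw [div_pow, div_pow, mul_pow, mul_pow]
  field_simp

lemma aux_eq_up (B cr Kf w n : ℝ) (l I K : ℕ)
    (hw : w ≠ 0) (hn : n ≠ 0) (hKf : Kf ≠ 0) :
    B * cr ^ I * 2 ^ K * Kf / w * (n ^ l * n ^ I / n ^ K)
      = (n ^ l * (B * (cr * n) ^ I)) / ((n / 2) ^ K / Kf * w) := by
  rw [div_pow]
  field_simp
  ring

set_option maxHeartbeats 3000000 in
/-- For fixed `q ≥ 2`, `c ≥ 1`, `d ≥ 3`, `l ≥ 1`: in the degenerate cases
`R_n(l) = 0`; otherwise `R_n(l) = Θ(n^{−⌈(c−2)l/2⌉})` along `n` with `d ∣ cn`. -/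
theorem small_weight_asymptotics (q c d l : ℕ) (hq : 2 ≤ q) (hc : 1 ≤ c) (hd : 3 ≤ d)
    (hl : 1 ≤ l) :
    ((c = 1 ∧ l = 1) ∨ (q = 2 ∧ Odd (c * l)) →
      ∀ n : ℕ, 1 ≤ n → d ∣ c * n → Rfun q c d l n = 0) ∧
    (¬((c = 1 ∧ l = 1) ∨ (q = 2 ∧ Odd (c * l))) →
      ∃ (k₁ k₂ : ℝ) (N : ℕ), 0 < k₁ ∧ k₁ ≤ k₂ ∧
        ∀ n : ℕ, N ≤ n → d ∣ c * n →
          k₁ * (n : ℝ) ^ (-(⌈((c : ℝ) - 2) * (l : ℝ) / 2⌉ : ℤ)) ≤ Rfun q c d l n ∧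
          Rfun q c d l n ≤ k₂ * (n : ℝ) ^ (-(⌈((c : ℝ) - 2) * (l : ℝ) / 2⌉ : ℤ))) := by
  constructor
  · rintro (⟨hc1, hl1⟩ | ⟨hq2, hodd⟩) n hn hdvd
    · subst hc1; subst hl1
      have hco : (gPoly q d (1 * n / d)).coeff (1 * 1) = 0 := by
        rw [gPoly_coeff_eq, Spow_coeff]
        rw [show (1 * 1 : ℕ) = 1 by norm_num]
        rw [Finset.sum_eq_zero, mul_zero]
        intro k hk
        rcases Nat.eq_zero_or_pos k with rfl | hk0
        · simp [Polynomial.coeff_one]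
        · rw [pow_coeff_low (Tpoly q d) (Tpoly_coeff_zero q d) (Tpoly_coeff_one q d) k 1
            (by omega), mul_zero]
      unfold Rfun
      rw [hco, mul_zero, zero_div]
    · subst hq2
      have hco : (gPoly 2 d (c * n / d)).coeff (c * l) = 0 := by
        rw [gPoly_coeff_eq, Spow_coeff]
        rw [Finset.sum_eq_zero, mul_zero]
        intro k hk
        rw [pow_coeff_odd_zero' (Tpoly 2 d) (Tpoly_coeff_odd_zero d) k (c * l) hodd, mul_zero]
      unfold Rfun
      rw [hco, mul_zero, zero_div]
  · intro hnd
    have hq0 : (0:ℝ) < (q:ℝ) := by positivity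
    have hq2r : (2:ℝ) ≤ (q:ℝ) := by exact_mod_cast hq
    have hq1 : (1:ℝ) ≤ (q:ℝ) - 1 := by linarith
    obtain ⟨K, hK⟩ : ∃ K, K = c * l := ⟨_, rfl⟩
    obtain ⟨I, hI⟩ : ∃ I, I = K / 2 := ⟨_, rfl⟩
    have hnn := Tpoly_coeff_nonneg q d hq
    have h0 := Tpoly_coeff_zero q d
    have h1 := Tpoly_coeff_one q d
    have hc2 := Tpoly_coeff_two_pos q d hq hd
    have hK1 : 1 ≤ K := by
      rw [hK]; exact Nat.one_le_iff_ne_zero.mpr (by positivity)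
    obtain ⟨tI, htIdef⟩ : ∃ t : ℝ, t = ((Tpoly q d) ^ I).coeff K := ⟨_, rfl⟩
    -- positivity of tI
    have htIpos : 0 < tI := by
      rcases Nat.even_or_odd K with he | ho
      · have h2I : 2 * I = K := by
          have := Nat.even_iff.mp he; omega
        rw [htIdef, ← h2I, pow_coeff_diag _ h0 h1]
        exact pow_pos hc2 I
      · have hq3 : 3 ≤ q := by
          rcases Nat.lt_or_ge q 3 with h | h
          · exfalso; apply hnd; right
            exact ⟨by omega, hK ▸ ho⟩
          · exact h
        have hKne1 : K ≠ 1 := by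
          intro h
          rw [hK] at h
          exact hnd (Or.inl ⟨Nat.eq_one_of_mul_eq_one_right h, Nat.eq_one_of_mul_eq_one_left h⟩)
        have hoK := Nat.odd_iff.mp ho
        have hK3 : 3 ≤ K := by omega
        obtain ⟨i, hi⟩ : ∃ i, I = i + 1 := ⟨I - 1, by omega⟩
        have h3i : 3 + 2 * i = K := by omega
        have hc3 := Tpoly_coeff_three_pos q d hq3 hd
        have hle := coeff_mul_single_le (Tpoly q d) ((Tpoly q d) ^ i) hnn
          (pow_coeff_nonneg _ hnn i) 3 (2 * i)
        rw [pow_coeff_diag _ h0 h1 i, ← pow_succ', h3i] at hle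
        rw [htIdef, hi]
        calc (0:ℝ) < (Tpoly q d).coeff 3 * (Tpoly q d).coeff 2 ^ i :=
              mul_pos hc3 (pow_pos hc2 i)
          _ ≤ _ := hle
    -- constants
    obtain ⟨w, hw⟩ : ∃ w : ℝ, w = ((q:ℝ) - 1) ^ ((c - 1) * l) := ⟨_, rfl⟩
    have hwpos : (0:ℝ) < w := hw ▸ pow_pos (by linarith) _
    obtain ⟨B, hB⟩ : ∃ B : ℝ, B = ∑ k ∈ Finset.range (I + 1), ((Tpoly q d) ^ k).coeff K :=
      ⟨_, rfl⟩
    have hBnn : 0 ≤ B := hB ▸ Finset.sum_nonneg fun k _ => pow_coeff_nonneg _ hnn k K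
    have hd0r : (0:ℝ) < (d:ℝ) := by positivity
    have hc0r : (0:ℝ) < (c:ℝ) := by positivity
    obtain ⟨k₁, hk₁⟩ : ∃ x : ℝ, x = tI * ((q:ℝ) ^ I)⁻¹ /
        ((2:ℝ) ^ l * l.factorial * (2 * (d:ℝ)) ^ I * I.factorial * (c:ℝ) ^ K * w) := ⟨_, rfl⟩
    obtain ⟨k₂', hk₂'⟩ : ∃ x : ℝ, x = B * (c:ℝ) ^ I * 2 ^ K * K.factorial / w := ⟨_, rfl⟩
    have hk₁pos : 0 < k₁ := by
      rw [hk₁]; positivity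
    refine ⟨k₁, max k₁ k₂', 2 * d * (K + l + I + 1), hk₁pos, le_max_left _ _, ?_⟩
    intro n hn hdvd
    obtain ⟨m, hm⟩ := hdvd
    have hd0 : 0 < d := by omega
    have hmdef : c * n / d = m := by rw [hm, Nat.mul_div_cancel_left m hd0]
    -- nat inequalities
    have haux : K + l + I + 1 ≤ d * (K + l + I + 1) := Nat.le_mul_of_pos_left _ hd0
    have hNn : 2 * (d * (K + l + I + 1)) ≤ n := by rw [← mul_assoc]; exact hn
    have hnl : 2 * l ≤ n := by omega
    have hnK : 2 * K ≤ n := by omega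
    have hn1 : 1 ≤ n := by omega
    have hncn : n ≤ c * n := Nat.le_mul_of_pos_left n (by omega)
    have hKcn : 2 * K ≤ c * n := le_trans hnK hncn
    have hdm : d * (2 * I + 2) ≤ d * m := by
      calc d * (2 * I + 2) ≤ 2 * (d * (K + l + I + 1)) := by ring_nf; omega
        _ ≤ n := hNn
        _ ≤ c * n := hncn
        _ = d * m := hm
    have hmI : 2 * I + 2 ≤ m := Nat.le_of_mul_le_mul_left hdm hd0
    have hm1 : 1 ≤ m := by omega
    -- real facts
    have hn0 : (0:ℝ) < (n:ℝ) := by exact_mod_cast hn1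
    have hm0 : (0:ℝ) < (m:ℝ) := by exact_mod_cast hm1
    have hmr : (c:ℝ) * (n:ℝ) = (d:ℝ) * (m:ℝ) := by exact_mod_cast hm
    have hmlow : (n:ℝ) / (d:ℝ) ≤ (m:ℝ) := by
      rw [div_le_iff₀ hd0r]
      nlinarith [hmr, (by exact_mod_cast hc : (1:ℝ) ≤ (c:ℝ))]
    have hmup : (m:ℝ) ≤ (c:ℝ) * (n:ℝ) := by
      have hd3 : (3:ℝ) ≤ (d:ℝ) := by exact_mod_cast hd
      nlinarith [mul_nonneg (by linarith : (0:ℝ) ≤ (d:ℝ) - 1) (le_of_lt hm0)]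
    -- coefficient bounds
    obtain ⟨F, hF⟩ : ∃ F : ℝ, F = (gPoly q d (c * n / d)).coeff K := ⟨_, rfl⟩
    have hflow : (m.choose I : ℝ) * ((q:ℝ) ^ I)⁻¹ * tI ≤ F := by
      rw [hF, htIdef, hmdef, gPoly_coeff_formula q d m K (by omega) (by omega : K / 2 ≤ m), ← hI]
      exact Finset.single_le_sum
        (f := fun k => (m.choose k : ℝ) * ((q:ℝ) ^ k)⁻¹ * ((Tpoly q d) ^ k).coeff K)
        (fun k _ => mul_nonneg (mul_nonneg (by positivity) (by positivity))
          (pow_coeff_nonneg _ hnn k K))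
        (Finset.mem_range.mpr (by omega))
    have hfup : F ≤ B * (m:ℝ) ^ I := by
      rw [hF, hB, hmdef, gPoly_coeff_formula q d m K (by omega) (by omega : K / 2 ≤ m), ← hI]
      rw [Finset.sum_mul]
      apply Finset.sum_le_sum
      intro k hk
      rw [Finset.mem_range] at hk
      have h1' : (m.choose k : ℝ) ≤ (m:ℝ) ^ k := by
        exact_mod_cast Nat.choose_le_pow m k
      have h2' : (m:ℝ) ^ k ≤ (m:ℝ) ^ I :=
        pow_le_pow_right₀ (by exact_mod_cast hm1) (by omega)
      have h3' : ((q:ℝ) ^ k)⁻¹ ≤ 1 := by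
        rw [inv_le_one_iff₀]; right; exact one_le_pow₀ (by linarith)
      have htk := pow_coeff_nonneg _ hnn k K
      calc (m.choose k : ℝ) * ((q:ℝ) ^ k)⁻¹ * ((Tpoly q d) ^ k).coeff K
          ≤ (m:ℝ) ^ I * 1 * ((Tpoly q d) ^ k).coeff K := by
            apply mul_le_mul_of_nonneg_right _ htk
            exact mul_le_mul (le_trans h1' h2') h3' (by positivity) (by positivity)
        _ = ((Tpoly q d) ^ k).coeff K * (m:ℝ) ^ I := by ring
    have hfnn : 0 ≤ F := by
      refine le_trans ?_ hflow
      have : (0:ℝ) ≤ (m.choose I : ℝ) := by positivity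
      positivity
    -- binomial bounds
    have hCnl_low : ((n:ℝ) / 2) ^ l / l.factorial ≤ (n.choose l : ℝ) := by
      refine le_trans ?_ (Nat.pow_le_choose l n)
      have hcast : (n:ℝ) / 2 ≤ ((n + 1 - l : ℕ) : ℝ) := by
        rw [Nat.cast_sub (by omega)]
        push_cast
        have : (2:ℝ) * l ≤ n := by exact_mod_cast hnl
        linarith
      gcongr
    have hCmI_low : ((n:ℝ) / (2 * d)) ^ I / I.factorial ≤ (m.choose I : ℝ) := by
      refine le_trans ?_ (Nat.pow_le_choose I m)
      have hcast : (n:ℝ) / (2 * d) ≤ ((m + 1 - I : ℕ) : ℝ) := by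
        rw [Nat.cast_sub (by omega)]
        push_cast
        have h2I : 2 * (I:ℝ) ≤ (m:ℝ) := by exact_mod_cast (by omega : 2 * I ≤ m)
        have heq2 : (n:ℝ) / (2 * d) = ((n:ℝ) / d) / 2 := by ring
        have : (n:ℝ) / (2 * d) ≤ (m:ℝ) / 2 := by rw [heq2]; linarith [hmlow]
        linarith
      gcongr
    have hCcn_up : (((c * n).choose K : ℕ) : ℝ) ≤ ((c:ℝ) * n) ^ K := by
      have := Nat.choose_le_pow (c * n) K
      exact_mod_cast this
    have hCcn_low : ((n:ℝ) / 2) ^ K / K.factorial ≤ (((c * n).choose K : ℕ) : ℝ) := by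
      refine le_trans ?_ (Nat.pow_le_choose K (c * n))
      have hcast : (n:ℝ) / 2 ≤ ((c * n + 1 - K : ℕ) : ℝ) := by
        rw [Nat.cast_sub (by omega)]
        push_cast
        have h1' : 2 * (K:ℝ) ≤ (c:ℝ) * n := by exact_mod_cast hKcn
        have h2' : (n:ℝ) ≤ (c:ℝ) * n := by exact_mod_cast hncn
        linarith
      gcongr
    have hCnl_up : (n.choose l : ℝ) ≤ (n:ℝ) ^ l := by
      exact_mod_cast Nat.choose_le_pow n l
    have hCcn_pos : (0:ℝ) < (((c * n).choose K : ℕ) : ℝ) := by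
      exact_mod_cast Nat.choose_pos (by omega : K ≤ c * n)
    -- the power identity
    have hzpow : (n:ℝ) ^ (-(⌈((c : ℝ) - 2) * (l : ℝ) / 2⌉ : ℤ))
        = (n:ℝ) ^ l * (n:ℝ) ^ I / (n:ℝ) ^ K := by
      rw [ceil_formula c l, ← hK, ← hI]
      have hne : (n:ℝ) ≠ 0 := ne_of_gt hn0
      rw [show -((K:ℤ) - (I:ℤ) - (l:ℤ)) = ((l:ℤ) + (I:ℤ)) - (K:ℤ) by ring,
        zpow_sub₀ hne, zpow_add₀ hne]
      norm_cast
    rw [hzpow]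
    unfold Rfun
    rw [← hK, ← hw, ← hF]
    constructor
    · -- lower bound
      have heq : k₁ * ((n:ℝ) ^ l * (n:ℝ) ^ I / (n:ℝ) ^ K)
          = (((n:ℝ) / 2) ^ l / l.factorial *
              (((n:ℝ) / (2 * d)) ^ I / I.factorial * (((q:ℝ) ^ I)⁻¹ * tI))) /
            (((c:ℝ) * n) ^ K * w) := by
        rw [hk₁]
        exact aux_eq_low tI ((q:ℝ) ^ I)⁻¹ l.factorial I.factorial (d:ℝ) (c:ℝ) w (n:ℝ) l I K
          (by positivity) (by positivity) (ne_of_gt hd0r) (ne_of_gt hc0r)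
          (ne_of_gt hwpos) (ne_of_gt hn0)
      rw [heq]
      apply div_le_div₀ (by positivity)
      · calc ((n:ℝ) / 2) ^ l / l.factorial *
              (((n:ℝ) / (2 * d)) ^ I / I.factorial * (((q:ℝ) ^ I)⁻¹ * tI))
            ≤ (n.choose l : ℝ) * ((m.choose I : ℝ) * (((q:ℝ) ^ I)⁻¹ * tI)) := by
              apply mul_le_mul hCnl_low _ (by positivity) (by positivity)
              exact mul_le_mul_of_nonneg_right hCmI_low (by positivity)
          _ ≤ (n.choose l : ℝ) * F := by
              apply mul_le_mul_of_nonneg_left _ (by positivity)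
              calc (m.choose I : ℝ) * (((q:ℝ) ^ I)⁻¹ * tI)
                  = (m.choose I : ℝ) * ((q:ℝ) ^ I)⁻¹ * tI := by ring
                _ ≤ _ := hflow
      · positivity
      · exact mul_le_mul_of_nonneg_right hCcn_up (le_of_lt hwpos)
    · -- upper bound
      have heq : k₂' * ((n:ℝ) ^ l * (n:ℝ) ^ I / (n:ℝ) ^ K)
          = ((n:ℝ) ^ l * (B * ((c:ℝ) * n) ^ I)) / ((((n:ℝ) / 2) ^ K / K.factorial) * w) := by
        rw [hk₂']
        exact aux_eq_up B (c:ℝ) K.factorial w (n:ℝ) l I K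
          (ne_of_gt hwpos) (ne_of_gt hn0) (by positivity)
      calc (n.choose l : ℝ) * F /
            ((((c * n).choose K : ℕ) : ℝ) * w)
          ≤ ((n:ℝ) ^ l * (B * ((c:ℝ) * n) ^ I)) / ((((n:ℝ) / 2) ^ K / K.factorial) * w) := by
            apply div_le_div₀ (by positivity)
            · apply mul_le_mul hCnl_up _ hfnn (by positivity)
              refine le_trans hfup ?_
              apply mul_le_mul_of_nonneg_left _ hBnn
              exact pow_le_pow_left₀ (le_of_lt hm0) hmup I
            · positivity
            · exact mul_le_mul_of_nonneg_right hCcn_low (le_of_lt hwpos)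
        _ = k₂' * ((n:ℝ) ^ l * (n:ℝ) ^ I / (n:ℝ) ^ K) := heq.symm
        _ ≤ max k₁ k₂' * ((n:ℝ) ^ l * (n:ℝ) ^ I / (n:ℝ) ^ K) := by
            apply mul_le_mul_of_nonneg_right (le_max_right _ _) (by positivity)
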